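/- arXiv:0806.2995 — 2 statements merged into one kernel-verified Lean document; each statement's English description precedes it below -/
import Mathlib

section
/- Let σ be a permutation of an 8-element set W acting with cycle type (4,4). Then the number of ⟨σ⟩-stable partitions of W into four disjoint pairs is exactly 5. -/
open Equiv Finset


set_option linter.unusedSectionVars false
section Defs
variable {W : Type*}

private def PropsP [DecidableEq W] (σ : Equiv.Perm W) (P : Finset (Finset W)) : Prop :=
  (∀ p ∈ P, p.card = 2) ∧
  (∀ p ∈ P, ∀ q ∈ P, p ≠ q → Disjoint p q) ∧
  (∀ w : W, ∃ p ∈ P, w ∈ p) ∧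
  (∀ p ∈ P, p.image σ ∈ P)

private def PropsF (σ f : Equiv.Perm W) : Prop :=
  (∀ x, f (f x) = x) ∧ (∀ x, f x ≠ x) ∧ (∀ x, σ (f x) = f (σ x))

end Defs

section LayerC

variable {W : Type*} [Fintype W] [DecidableEq W] (σ : Equiv.Perm W)

private theorem pair_swap {f : Equiv.Perm W} (hf : PropsF σ f) {w x : W}
    (hx : x ∈ ({w, f w} : Finset W)) : ({w, f w} : Finset W) = {x, f x} := by
  rcases Finset.mem_insert.mp hx with h | h
  · subst h; rfl
  · simp only [Finset.mem_singleton] at h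
    subst h
    rw [hf.1 w, pair_comm]

private def toPart (f : {f : Equiv.Perm W // PropsF σ f}) :
    {P : Finset (Finset W) // PropsP σ P} := by
  refine ⟨Finset.univ.image (fun w => ({w, f.1 w} : Finset W)), ?_, ?_, ?_, ?_⟩
  · intro p hp
    obtain ⟨w, -, rfl⟩ := Finset.mem_image.mp hp
    exact Finset.card_pair (fun h => f.2.2.1 w h.symm)
  · intro p hp q hq hpq
    obtain ⟨a, -, rfl⟩ := Finset.mem_image.mp hp
    obtain ⟨b, -, rfl⟩ := Finset.mem_image.mp hq
    by_contra hnd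
    obtain ⟨x, hx1, hx2⟩ := Finset.not_disjoint_iff.mp hnd
    exact hpq ((pair_swap σ f.2 hx1).trans (pair_swap σ f.2 hx2).symm)
  · intro w
    exact ⟨{w, f.1 w}, Finset.mem_image_of_mem _ (Finset.mem_univ w),
      Finset.mem_insert_self w _⟩
  · intro p hp
    obtain ⟨w, -, rfl⟩ := Finset.mem_image.mp hp
    have : Finset.image σ ({w, f.1 w} : Finset W) = {σ w, f.1 (σ w)} := by
      rw [Finset.image_insert, Finset.image_singleton, f.2.2.2 w]
    rw [this]
    exact Finset.mem_image_of_mem _ (Finset.mem_univ (σ w))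

private theorem toPart_bij : Function.Bijective (toPart σ) := by
  constructor
  · rintro ⟨f, hf⟩ ⟨g, hg⟩ h
    have h' := congrArg Subtype.val h
    simp only [toPart] at h'
    ext w
    · have hmem : ({w, f w} : Finset W) ∈ Finset.univ.image
          (fun w => ({w, g w} : Finset W)) := by
        rw [← h']; exact Finset.mem_image_of_mem _ (Finset.mem_univ w)
      obtain ⟨v, -, hv⟩ := Finset.mem_image.mp hmem
      have hw : w ∈ ({v, g v} : Finset W) := by
        rw [hv]; exact Finset.mem_insert_self w _
      have : ({w, f w} : Finset W) = {w, g w} := by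
        rw [← hv, pair_swap σ hg hw]
      have hfw : f w ∈ ({w, g w} : Finset W) := by
        rw [← this]; exact Finset.mem_insert.mpr (Or.inr (Finset.mem_singleton_self _))
      rcases Finset.mem_insert.mp hfw with h1 | h1
      · exact absurd h1 (hf.2.1 w)
      · simpa using h1
  · rintro ⟨P, h1, h2, h3, h4⟩
    -- partner existence
    have key : ∀ w : W, ∃ a, a ≠ w ∧ ({w, a} : Finset W) ∈ P := by
      intro w
      obtain ⟨p, hp, hw⟩ := h3 w
      obtain ⟨x, y, hxy, rfl⟩ := Finset.card_eq_two.mp (h1 p hp)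
      rcases Finset.mem_insert.mp hw with h | h
      · subst h; exact ⟨y, fun h => hxy h.symm, hp⟩
      · simp only [Finset.mem_singleton] at h
        subst h
        exact ⟨x, fun h => hxy h, by rwa [pair_comm]⟩
    have uniq : ∀ w a b : W, a ≠ w → b ≠ w → ({w, a} : Finset W) ∈ P →
        ({w, b} : Finset W) ∈ P → a = b := by
      intro w a b ha hb hpa hpb
      have heq : ({w, a} : Finset W) = {w, b} := by
        by_contra hne
        exact Finset.disjoint_left.mp (h2 _ hpa _ hpb hne)
          (Finset.mem_insert_self w _) (Finset.mem_insert_self w _)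
      have : a ∈ ({w, b} : Finset W) := by
        rw [← heq]; exact Finset.mem_insert.mpr (Or.inr (Finset.mem_singleton_self _))
      rcases Finset.mem_insert.mp this with h | h
      · exact absurd h ha
      · simpa using h
    choose f hf1 hf2 using key
    have hinv : ∀ w, f (f w) = w := by
      intro w
      refine uniq (f w) (f (f w)) w (hf1 _) (fun h => hf1 w h.symm) (hf2 _) ?_
      rw [pair_comm]; exact hf2 w
    have hcomm : ∀ w, σ (f w) = f (σ w) := by
      intro w
      have hmem : ({σ w, σ (f w)} : Finset W) ∈ P := by
        have := h4 _ (hf2 w)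
        rwa [Finset.image_insert, Finset.image_singleton] at this
      exact uniq (σ w) (σ (f w)) (f (σ w)) (fun h => hf1 w (σ.injective h))
        (hf1 (σ w)) hmem (hf2 (σ w))
    refine ⟨⟨⟨f, f, hinv, hinv⟩, hinv, hf1, hcomm⟩, ?_⟩
    apply Subtype.ext
    simp only [toPart]
    ext p
    simp only [Finset.mem_image, Finset.mem_univ, true_and]
    constructor
    · rintro ⟨w, rfl⟩; exact hf2 w
    · intro hp
      obtain ⟨x, y, hxy, rfl⟩ := Finset.card_eq_two.mp (h1 p hp)
      refine ⟨x, ?_⟩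
      rw [show (⟨⟨f, f, hinv, hinv⟩, hinv, hf1, hcomm⟩ : {f : Equiv.Perm W // PropsF σ f}).1 x
        = f x from rfl, uniq x (f x) y (hf1 x) (fun h => hxy h.symm) (hf2 x) hp]

private instance : DecidablePred (PropsP σ) := fun P => by unfold PropsP; infer_instance
private instance : DecidablePred (PropsF σ) := fun f => by unfold PropsF; infer_instance

private theorem cardC :
    Fintype.card {P : Finset (Finset W) // PropsP σ P}
      = Fintype.card {f : Equiv.Perm W // PropsF σ f} :=
  (Fintype.card_of_bijective (toPart_bij σ)).symm

end LayerC


set_option linter.unusedSectionVars false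
set_option linter.unreachableTactic false
set_option linter.unusedTactic false
section Transfer
variable {W V : Type*} [Fintype W] [DecidableEq W] [Fintype V] [DecidableEq V]



private theorem propsF_congr (e : W ≃ V) {σ : Equiv.Perm W} {τ : Equiv.Perm V}
    (h : ∀ x, τ x = e (σ (e.symm x))) {f : Equiv.Perm W} (hf : PropsF σ f) :
    PropsF τ (e.permCongr f) := by
  obtain ⟨h1, h2, h3⟩ := hf
  refine ⟨?_, ?_, ?_⟩
  · intro x
    simp [Equiv.permCongr_apply, h1]
  · intro x hx
    apply h2 (e.symm x)
    have := congrArg e.symm hx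
    simpa using this
  · intro x
    simp only [Equiv.permCongr_apply]
    rw [h x, h (e (f (e.symm x)))]
    simp only [Equiv.symm_apply_apply]
    rw [h3]

private theorem cardT (e : W ≃ V) {σ : Equiv.Perm W} {τ : Equiv.Perm V}
    (h : ∀ x, τ x = e (σ (e.symm x))) :
    Fintype.card {f : Equiv.Perm W // PropsF σ f}
      = Fintype.card {f : Equiv.Perm V // PropsF τ f} := by
  refine Fintype.card_congr (Equiv.subtypeEquiv e.permCongr (fun f => ?_))
  constructor
  · exact propsF_congr e h
  · intro hf
    have h' : ∀ x, σ x = e.symm (τ (e.symm.symm x)) := by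
      intro x; rw [h]; simp
    have := propsF_congr e.symm h' hf
    have he : e.symm.permCongr (e.permCongr f) = f := by
      ext x; simp
    rwa [he] at this

end Transfer

section CycleCongr
variable {W V : Type*} [Fintype W] [DecidableEq W] [Fintype V] [DecidableEq V]

private def permCongrHom (e : W ≃ V) : Equiv.Perm W →* Equiv.Perm V where
  toFun := e.permCongr
  map_one' := by ext x; simp
  map_mul' := fun p q => by ext x; simp [Equiv.Perm.mul_apply]

private theorem support_permCongr (e : W ≃ V) (p : Equiv.Perm W) :
    (e.permCongr p).support = p.support.image e := by
  ext x
  simp only [Equiv.Perm.mem_support, Finset.mem_image, Equiv.permCongr_apply]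
  constructor
  · intro hx
    refine ⟨e.symm x, fun h => hx (by rw [h]; simp), by simp⟩
  · rintro ⟨y, hy, rfl⟩
    intro hx
    apply hy
    have := congrArg e.symm hx
    simpa using this

private theorem isCycle_permCongr (e : W ≃ V) {p : Equiv.Perm W} (hp : p.IsCycle) :
    (e.permCongr p).IsCycle := by
  obtain ⟨x, hx, hcyc⟩ := hp
  refine ⟨e x, by simp [hx], ?_⟩
  intro y hy
  have hy' : p (e.symm y) ≠ e.symm y := by
    intro h
    apply hy
    simp only [Equiv.permCongr_apply, h, Equiv.apply_symm_apply]
  obtain ⟨i, hi⟩ := hcyc hy'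
  refine ⟨i, ?_⟩
  have hz : (e.permCongr p) ^ i = e.permCongr (p ^ i) := by
    rw [show e.permCongr p = _root_.permCongrHom e p from rfl, ← map_zpow]
    rfl
  rw [hz]
  simp only [Equiv.permCongr_apply, Equiv.symm_apply_apply, hi, Equiv.apply_symm_apply]

private theorem disjoint_permCongr (e : W ≃ V) {p q : Equiv.Perm W}
    (h : p.Disjoint q) : (e.permCongr p).Disjoint (e.permCongr q) := by
  intro x
  rcases h (e.symm x) with h' | h' <;>
    simp [Equiv.permCongr_apply, h', Equiv.apply_symm_apply] <;> tauto

private theorem cycleType_permCongr (e : W ≃ V) (σ : Equiv.Perm W) :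
    (e.permCongr σ).cycleType = σ.cycleType := by
  obtain ⟨⟨l, h0, h1, h2⟩, -⟩ := Trunc.exists_rep σ.truncCycleFactors
  have h0' : (l.map (e.permCongr)).prod = e.permCongr σ := by
    rw [show (e.permCongr : Equiv.Perm W → Equiv.Perm V) = _root_.permCongrHom e from rfl,
      ← map_list_prod, h0]
  rw [Equiv.Perm.cycleType_eq _ h0'
      (by
        intro τ hτ
        obtain ⟨p, hp, rfl⟩ := List.mem_map.mp hτ
        exact isCycle_permCongr e (h1 p hp))
      (List.Pairwise.map _ (fun a b hab => disjoint_permCongr e hab) h2),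
    Equiv.Perm.cycleType_eq l h0 h1 h2, List.map_map]
  congr 1
  refine List.map_congr_left (fun p _ => ?_)
  simp [Function.comp, support_permCongr, Finset.card_image_of_injective _ e.injective]
end CycleCongr




private def sig0 : Equiv.Perm (Fin 8) :=
  List.formPerm [(0:Fin 8),1,2,3] * List.formPerm [(4:Fin 8),5,6,7]

private def gfun (a b : Fin 8) : Fin 8 → Fin 8 := fun x =>
  if x.val < 4 then (sig0 ^ x.val) a else (sig0 ^ (x.val - 4)) b

private def Q (ab : Fin 8 × Fin 8) : Prop :=
  (∀ x, gfun ab.1 ab.2 (gfun ab.1 ab.2 x) = x) ∧ (∀ x, gfun ab.1 ab.2 x ≠ x) ∧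
  (∀ x, sig0 (gfun ab.1 ab.2 x) = gfun ab.1 ab.2 (sig0 x))

private instance : DecidablePred Q := fun ab => by unfold Q; infer_instance

set_option maxRecDepth 10000 in
private theorem cardQ : Fintype.card {ab : Fin 8 × Fin 8 // Q ab} = 5 := by decide

set_option maxRecDepth 10000 in
private theorem hA : ∀ x : Fin 8, x.val < 4 → (sig0 ^ x.val) 0 = x := by decide

set_option maxRecDepth 10000 in
private theorem hB : ∀ x : Fin 8, ¬ x.val < 4 → (sig0 ^ (x.val - 4)) 4 = x := by decide

private theorem gfun_zero (a b : Fin 8) : gfun a b 0 = a := by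
  simp [gfun]

private theorem gfun_four (a b : Fin 8) : gfun a b 4 = b := by
  have h4 : ((4 : Fin 8)).val = 4 := rfl
  norm_num [gfun, h4]

private def qToF (ab : {ab : Fin 8 × Fin 8 // Q ab}) :
    {f : Equiv.Perm (Fin 8) // PropsF sig0 f} :=
  ⟨⟨gfun ab.1.1 ab.1.2, gfun ab.1.1 ab.1.2, ab.2.1, ab.2.1⟩,
    ab.2.1, ab.2.2.1, (ab.2.2.2 : ∀ x, sig0 (gfun ab.1.1 ab.1.2 x) = gfun ab.1.1 ab.1.2 (sig0 x))⟩

private theorem qToF_bij : Function.Bijective qToF := by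
  constructor
  · rintro ⟨⟨a, b⟩, hab⟩ ⟨⟨a', b'⟩, hab'⟩ h
    have h' : gfun a b = gfun a' b' := congrArg (fun f => (Subtype.val f).toFun) h
    have h0 := congrFun h' 0
    have h4 := congrFun h' 4
    rw [gfun_zero, gfun_zero] at h0
    rw [gfun_four, gfun_four] at h4
    simp [h0, h4]
  · rintro ⟨f, hf1, hf2, hf3⟩
    have comm : ∀ (k : ℕ) (x : Fin 8), (sig0 ^ k) (f x) = f ((sig0 ^ k) x) := by
      intro k
      induction k with
      | zero => simp
      | succ n ih =>
        intro x
        rw [pow_succ, Equiv.Perm.mul_apply, Equiv.Perm.mul_apply, hf3, ih]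
    have hg : ∀ x, gfun (f 0) (f 4) x = f x := by
      intro x
      unfold gfun
      by_cases hx : x.val < 4
      · rw [if_pos hx, comm, hA x hx]
      · rw [if_neg hx, comm, hB x hx]
    have hq : Q (f 0, f 4) := by
      refine ⟨?_, ?_, ?_⟩ <;> intro x <;> simp only [hg]
      · exact hf1 x
      · exact hf2 x
      · exact hf3 x
    refine ⟨⟨(f 0, f 4), hq⟩, ?_⟩
    apply Subtype.ext
    exact Equiv.ext hg

private theorem cardF5 : Fintype.card {f : Equiv.Perm (Fin 8) // PropsF sig0 f} = 5 := by
  rw [← Fintype.card_of_bijective qToF_bij, cardQ]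

private theorem sig0_cycleType : sig0.cycleType = ({4, 4} : Multiset ℕ) := by
  have hd : (List.formPerm [(0:Fin 8),1,2,3]).Disjoint (List.formPerm [(4:Fin 8),5,6,7]) := by
    have : ∀ x, List.formPerm [(0:Fin 8),1,2,3] x = x ∨ List.formPerm [(4:Fin 8),5,6,7] x = x := by
      decide
    exact this
  have hc1 : (List.formPerm [(0:Fin 8),1,2,3]).IsCycle :=
    List.isCycle_formPerm (by decide) (by decide)
  have hc2 : (List.formPerm [(4:Fin 8),5,6,7]).IsCycle :=
    List.isCycle_formPerm (by decide) (by decide)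
  have hs1 : (List.formPerm [(0:Fin 8),1,2,3]).support = [(0:Fin 8),1,2,3].toFinset :=
    List.support_formPerm_of_nodup _ (by decide) (by decide)
  have hs2 : (List.formPerm [(4:Fin 8),5,6,7]).support = [(4:Fin 8),5,6,7].toFinset :=
    List.support_formPerm_of_nodup _ (by decide) (by decide)
  rw [sig0, hd.cycleType_mul, hc1.cycleType, hc2.cycleType, hs1, hs2]
  decide


/-- If σ acts on an 8-element set with two 4-cycles, there are exactly 5
σ-stable partitions of the set into four disjoint pairs. -/
theorem stable_pair_partitions_two_four_cycles
    {W : Type*} [Fintype W] [DecidableEq W] (hW : Fintype.card W = 8)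
    (σ : Equiv.Perm W) (hσ : σ.cycleType = ({4, 4} : Multiset ℕ)) :
    Fintype.card {P : Finset (Finset W) //
      (∀ p ∈ P, p.card = 2) ∧
      (∀ p ∈ P, ∀ q ∈ P, p ≠ q → Disjoint p q) ∧
      (∀ w : W, ∃ p ∈ P, w ∈ p) ∧
      (∀ p ∈ P, p.image σ ∈ P)} = 5 := by
  let e : W ≃ Fin 8 := Fintype.equivFinOfCardEq hW
  have hct : (e.permCongr σ).cycleType = ({4, 4} : Multiset ℕ) := by
    rw [cycleType_permCongr, hσ]
  have hconj : IsConj (e.permCongr σ) sig0 :=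
    Equiv.Perm.isConj_iff_cycleType_eq.mpr (by rw [hct, sig0_cycleType])
  obtain ⟨g, hg⟩ := isConj_iff.mp hconj
  let e' : W ≃ Fin 8 := e.trans (g : Equiv.Perm (Fin 8))
  have he' : ∀ x, sig0 x = e' (σ (e'.symm x)) := by
    intro x
    rw [← hg]
    simp [e', Equiv.Perm.mul_apply, Equiv.Perm.inv_def]
  have step0 : Fintype.card {P : Finset (Finset W) //
      (∀ p ∈ P, p.card = 2) ∧
      (∀ p ∈ P, ∀ q ∈ P, p ≠ q → Disjoint p q) ∧
      (∀ w : W, ∃ p ∈ P, w ∈ p) ∧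
      (∀ p ∈ P, p.image σ ∈ P)}
      = Fintype.card {P : Finset (Finset W) // PropsP σ P} :=
    Fintype.card_congr (Equiv.subtypeEquivRight (fun P => Iff.rfl))
  rw [step0, cardC σ, cardT e' he', cardF5]
end

section
/- Let σ be a permutation of an 8-element set with cycle type containing a cycle of odd length m > 1 such that no other cycle of σ has length m (e.g. cycle types (5,3), (7,1), (5,2,1), (5,1,1,1), (3,2,2,1), (3,4,1) etc., any type with an unpaired odd cycle of length > 1). Then there is no ⟨σ⟩-stable partition of the 8-element set into four disjoint pairs. -/
open Equiv Equiv.Perm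

private lemma even_card_fpf {α : Type*} [DecidableEq α] (s : Finset α) :
    ∀ (f : α → α), (∀ x ∈ s, f x ∈ s) → (∀ x ∈ s, f (f x) = x) → (∀ x ∈ s, f x ≠ x) →
      Even s.card := by
  induction s using Finset.strongInduction with
  | _ s ih =>
    intro f h1 h2 h3
    rcases s.eq_empty_or_nonempty with rfl | ⟨a, ha⟩
    · simp
    · have hfa : f a ∈ s := h1 a ha
      have hne : f a ≠ a := h3 a ha
      set t := (s.erase a).erase (f a) with ht
      have htsub : t ⊆ s := fun x hx =>
        Finset.mem_of_mem_erase (Finset.mem_of_mem_erase hx)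
      have hat : a ∉ t := by
        intro h
        exact (Finset.ne_of_mem_erase (Finset.mem_of_mem_erase h)) rfl
      have hssub : t ⊂ s := Finset.ssubset_iff_of_subset htsub |>.mpr ⟨a, ha, hat⟩
      have hmemt : ∀ x ∈ t, x ∈ s ∧ x ≠ a ∧ x ≠ f a := by
        intro x hx
        exact ⟨htsub hx, Finset.ne_of_mem_erase (Finset.mem_of_mem_erase hx),
          Finset.ne_of_mem_erase hx⟩
      have h1' : ∀ x ∈ t, f x ∈ t := by
        intro x hx
        obtain ⟨hxs, hxa, hxfa⟩ := hmemt x hx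
        have hfx : f x ∈ s := h1 x hxs
        have hfxa : f x ≠ a := by
          intro h
          exact hxfa (by rw [← h2 x hxs, h])
        have hfxfa : f x ≠ f a := by
          intro h
          exact hxa (by rw [← h2 x hxs, h, h2 a ha])
        exact Finset.mem_erase.mpr ⟨hfxfa, Finset.mem_erase.mpr ⟨hfxa, hfx⟩⟩
      have heven : Even t.card := ih t hssub f h1'
        (fun x hx => h2 x (htsub hx)) (fun x hx => h3 x (htsub hx))
      have hfa' : f a ∈ s.erase a := Finset.mem_erase.mpr ⟨hne, hfa⟩
      have hc1 : t.card = (s.erase a).card - 1 := Finset.card_erase_of_mem hfa'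
      have hc2 : (s.erase a).card = s.card - 1 := Finset.card_erase_of_mem ha
      have h2le : 2 ≤ s.card := Finset.one_lt_card.mpr ⟨a, ha, f a, hfa, hne.symm⟩
      obtain ⟨k, hk⟩ := heven
      exact ⟨k + 1, by omega⟩

/-- If a permutation σ of an 8-element set has some odd cycle length m > 1
occurring an odd number of times, then there is no ⟨σ⟩-stable partition of
the set into four disjoint pairs. -/
theorem no_stable_pair_partition_of_unpaired_odd_cycle
    {W : Type*} [Fintype W] [DecidableEq W] (hW : Fintype.card W = 8)
    (σ : Equiv.Perm W)
    (hm : ∃ m : ℕ, Odd m ∧ 1 < m ∧ Odd (σ.cycleType.count m)) :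
    ¬∃ P : Finset (Finset W),
      (∀ p ∈ P, p.card = 2) ∧
      (∀ p ∈ P, ∀ q ∈ P, p ≠ q → Disjoint p q) ∧
      (∀ w : W, ∃ p ∈ P, w ∈ p) ∧
      (∀ p ∈ P, p.image σ ∈ P) := by
  obtain ⟨m, hmodd, hm1, hcount⟩ := hm
  rintro ⟨P, hcard, hdisj, hcover, hstab⟩
  classical
  -- uniqueness of the pair containing a point
  have huniq : ∀ w : W, ∀ p ∈ P, ∀ q ∈ P, w ∈ p → w ∈ q → p = q := by
    intro w p hp q hq hwp hwq
    by_contra hne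
    exact Finset.disjoint_left.mp (hdisj p hp q hq hne) hwp hwq
  choose pr hprP hprmem using hcover
  -- the "other element" function
  have herase : ∀ w : W, ∃ a, (pr w).erase w = {a} := by
    intro w
    apply Finset.card_eq_one.mp
    rw [Finset.card_erase_of_mem (hprmem w), hcard (pr w) (hprP w)]
  choose f hf using herase
  have hfmem : ∀ w, f w ∈ pr w := by
    intro w
    have : f w ∈ (pr w).erase w := by rw [hf w]; exact Finset.mem_singleton_self _
    exact Finset.mem_of_mem_erase this
  have hfne : ∀ w, f w ≠ w := by
    intro w
    have : f w ∈ (pr w).erase w := by rw [hf w]; exact Finset.mem_singleton_self _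
    exact Finset.ne_of_mem_erase this
  have hprf : ∀ w, pr (f w) = pr w := fun w =>
    huniq (f w) (pr (f w)) (hprP _) (pr w) (hprP w) (hprmem _) (hfmem w)
  have hinv : Function.Involutive f := by
    intro w
    have h1 : (pr (f w)).erase (f w) = {f (f w)} := hf (f w)
    rw [hprf w] at h1
    have h2 : w ∈ (pr w).erase (f w) := Finset.mem_erase.mpr ⟨(hfne w).symm, hprmem w⟩
    rw [h1, Finset.mem_singleton] at h2
    exact h2.symm
  have hcomm : ∀ w, f (σ w) = σ (f w) := by
    intro w
    have himg : (pr w).image σ ∈ P := hstab (pr w) (hprP w)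
    have hmem : σ w ∈ (pr w).image σ := Finset.mem_image_of_mem σ (hprmem w)
    have hpr : pr (σ w) = (pr w).image σ :=
      huniq (σ w) (pr (σ w)) (hprP _) _ himg (hprmem _) hmem
    have h1 : (pr (σ w)).erase (σ w) = {f (σ w)} := hf (σ w)
    rw [hpr] at h1
    have h2 : σ (f w) ∈ ((pr w).image σ).erase (σ w) := by
      refine Finset.mem_erase.mpr ⟨fun h => hfne w (σ.injective h), ?_⟩
      exact Finset.mem_image_of_mem σ (hfmem w)
    rw [h1, Finset.mem_singleton] at h2
    exact h2.symm
  set τ : Equiv.Perm W := hinv.toPerm f with hτ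
  have hτapp : ∀ w, τ w = f w := fun w => rfl
  have hτσ : τ * σ = σ * τ := by
    ext w
    simp only [Equiv.Perm.mul_apply, hτapp]
    exact hcomm w
  have hτ2 : τ * τ = 1 := by
    ext w
    simp only [Equiv.Perm.mul_apply, Equiv.Perm.one_apply, hτapp]
    exact hinv w
  have hτinv : τ⁻¹ = τ := by
    rw [inv_eq_iff_mul_eq_one, hτ2]
  have hconjσ : τ * σ * τ⁻¹ = σ := by
    rw [hτσ, mul_assoc, hτinv, hτ2, mul_one]
  -- the set of m-cycles of σ
  set F : Finset (Equiv.Perm W) :=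
    σ.cycleFactorsFinset.filter (fun c => c.support.card = m) with hF
  -- count m in cycleType = card F
  have hcnt : σ.cycleType.count m = F.card := by
    rw [Equiv.Perm.cycleType_def, Multiset.count_map]
    rw [show F.card = Multiset.card (Multiset.filter
      (fun c : Equiv.Perm W => c.support.card = m) σ.cycleFactorsFinset.val) from rfl]
    congr 1
    apply Multiset.filter_congr
    intro x _
    simp [Function.comp, eq_comm]
  -- conjugation by τ is a fixed-point-free involution on F
  have hg1 : ∀ c ∈ F, τ * c * τ⁻¹ ∈ F := by
    intro c hc
    rw [hF, Finset.mem_filter] at hc ⊢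
    refine ⟨?_, ?_⟩
    · have := (Equiv.Perm.mem_cycleFactorsFinset_conj σ τ c).mpr hc.1
      rwa [hconjσ] at this
    · rw [Equiv.Perm.support_conj, Finset.card_map]
      exact hc.2
  have hg2 : ∀ c ∈ F, τ * (τ * c * τ⁻¹) * τ⁻¹ = c := by
    intro c _
    rw [hτinv]
    ext w
    simp only [Equiv.Perm.mul_apply, hτapp]
    rw [hinv, hinv]
  have hg3 : ∀ c ∈ F, τ * c * τ⁻¹ ≠ c := by
    intro c hc heq
    rw [hF, Finset.mem_filter] at hc
    obtain ⟨hcf, hcm⟩ := hc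
    have hm0 : 0 < m := lt_trans Nat.zero_lt_one hm1
    obtain ⟨x, hx⟩ := Finset.card_pos.mp (hcm ▸ hm0 : 0 < c.support.card)
    -- τ x ∈ c.support
    have hτx : τ x ∈ c.support := by
      have h1 : (τ * c * τ⁻¹).support = c.support.map τ.toEmbedding :=
        Equiv.Perm.support_conj
      rw [heq] at h1
      rw [h1]
      exact Finset.mem_map_of_mem _ hx
    have hceq : c = σ.cycleOf x := Equiv.Perm.cycle_is_cycleOf hx hcf
    have hsc : σ.SameCycle x (τ x) := by
      have := hceq ▸ hτx
      exact (Equiv.Perm.mem_support_cycleOf_iff.mp this).1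
    obtain ⟨j, hjlt, hj⟩ := hsc.exists_pow_eq'
    -- τ commutes with σ ^ j
    have hcommpow : τ * σ ^ j = σ ^ j * τ := (Commute.pow_right hτσ j)
    have h2j : (σ ^ (2 * j)) x = x := by
      have h1 : τ ((σ ^ j) x) = (σ ^ j) (τ x) := by
        have := congrArg (fun g => g x) hcommpow
        simpa using this
      have h2 : τ (τ x) = x := hinv x
      calc (σ ^ (2 * j)) x = (σ ^ j) ((σ ^ j) x) := by
            rw [two_mul, pow_add, Equiv.Perm.mul_apply]
        _ = (σ ^ j) (τ x) := by rw [hj]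
        _ = τ ((σ ^ j) x) := h1.symm
        _ = τ (τ x) := by rw [hj]
        _ = x := h2
    -- transfer to the cycle c
    have hcyc : c.IsCycle := (Equiv.Perm.mem_cycleFactorsFinset_iff.mp hcf).1
    have hcx : c x ≠ x := Equiv.Perm.mem_support.mp hx
    have hc2j : (c ^ (2 * j)) x = x := by
      rw [hceq, Equiv.Perm.cycleOf_pow_apply_self]
      exact h2j
    have hpow1 : c ^ (2 * j) = 1 := (hcyc.pow_eq_one_iff' hcx).mpr hc2j
    have horder : orderOf c = m := by rw [hcyc.orderOf, hcm]
    have hdvd2 : m ∣ 2 * j := horder ▸ orderOf_dvd_of_pow_eq_one hpow1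
    have hdvd : m ∣ j := (Nat.Coprime.dvd_of_dvd_mul_left
      (Nat.coprime_two_right.mpr hmodd) hdvd2)
    have hσj1 : c ^ j = 1 := by
      rw [← horder] at hdvd
      exact orderOf_dvd_iff_pow_eq_one.mp hdvd
    have hτxx : τ x = x := by
      rw [← hj, ← Equiv.Perm.cycleOf_pow_apply_self, ← hceq, hσj1]
      rfl
    exact hfne x hτxx
  have heven : Even F.card := even_card_fpf F (fun c => τ * c * τ⁻¹) hg1 hg2 hg3
  rw [hcnt] at hcount
  exact (Nat.not_even_iff_odd.mpr hcount) heven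
end
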